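/- Let κ be an inaccessible (regular limit) cardinal such that for every infinite cardinal λ < κ there exists a strongly independent family on λ⁺ of cardinality λ. Then κ is strongly inaccessible. -/

import Mathlib

open Cardinal

/-- if `κ` is inaccessible (uncountable, regular and a limit cardinal) and
for every infinite `λ < κ` there is a strongly independent family on a set of size `λ⁺`
of cardinality `λ`, then `κ` is strongly inaccessible. -/
theorem inaccessible_of_strongly_independent_families (κ : Cardinal.{0})
    (hu : ℵ₀ < κ) (hreg : κ.IsRegular) (hlim : ∀ l < κ, Order.succ l < κ)
    (h : ∀ l : Cardinal.{0}, ℵ₀ ≤ l → l < κ →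
      ∃ (β : Type) (_ : #β = Order.succ l) (𝓘 : Set (Set β)), #𝓘 = l ∧
        ∀ D ⊆ 𝓘, #D < Order.succ l → ∀ f : Set β → Bool,
          #(↥(⋂ I ∈ D, (if f I then Iᶜ else I))) = Order.succ l) :
    κ.IsInaccessible := by
  classical
  refine Cardinal.IsInaccessible.mk hu hreg.2 ?_
  intro l hl
  rcases lt_or_ge l ℵ₀ with hfin | hinf
  · exact lt_trans (Cardinal.power_lt_aleph0 (by exact_mod_cast Cardinal.nat_lt_aleph0 2) hfin) hu
  · obtain ⟨β, hβ, 𝓘, h𝓘, hind⟩ := h l hinf hl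
    -- extend g : ↥𝓘 → Bool to Set β → Bool
    have hsucc : l < Order.succ l := Order.lt_succ l
    have key : ∀ g : ↥𝓘 → Bool, ∃ x : β,
        ∀ I : ↥𝓘, x ∈ (if g I then (I : Set β)ᶜ else (I : Set β)) := by
      intro g
      set F : Set β → Bool := fun I => if hI : I ∈ 𝓘 then g ⟨I, hI⟩ else false with hF
      have hcard := hind 𝓘 (subset_refl _) (h𝓘 ▸ hsucc) F
      have hne : (⋂ I ∈ 𝓘, (if F I then Iᶜ else I)).Nonempty := by
        rw [← Set.nonempty_coe_sort, ← Cardinal.mk_ne_zero_iff, hcard]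
        have : (0 : Cardinal) < Order.succ l :=
          lt_of_le_of_lt (zero_le (a := l)) hsucc
        exact this.ne'
      obtain ⟨x, hx⟩ := hne
      refine ⟨x, fun I => ?_⟩
      have := Set.mem_iInter₂.1 hx I.1 I.2
      have hFI : F I.1 = g I := by simp [hF, I.2]
      rwa [hFI] at this
    choose Φ hΦ using key
    have hinj : Function.Injective Φ := by
      intro g g' hgg'
      by_contra hne
      obtain ⟨I, hI⟩ : ∃ I : ↥𝓘, g I ≠ g' I := by
        by_contra hc
        push_neg at hc
        exact hne (funext hc)
      have h1 := hΦ g I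
      have h2 := hΦ g' I
      rw [hgg'] at h1
      cases hg : g I <;> cases hg' : g' I
      · exact hI (hg.trans hg'.symm)
      · rw [hg] at h1; rw [hg'] at h2
        simp only [Bool.false_eq_true, if_false, if_true] at h1 h2
        exact h2 h1
      · rw [hg] at h1; rw [hg'] at h2
        simp only [Bool.false_eq_true, if_false, if_true] at h1 h2
        exact h1 h2
      · exact hI (hg.trans hg'.symm)
    have hle : #(↥𝓘 → Bool) ≤ #β := Cardinal.mk_le_of_injective hinj
    have heq : #(↥𝓘 → Bool) = 2 ^ l := by
      rw [Cardinal.mk_arrow]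
      simp [h𝓘]
    rw [heq, hβ] at hle
    exact lt_of_le_of_lt hle (hlim l hl)
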